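/- For integers m, n ≥ 2, the cycle hull number of the Cartesian product of complete graphs K_m □ K_n equals 3. -/

import Mathlib

open SimpleGraph

variable {V α β : Type*}

/-- A set `S` is cycle convex in `G` if no vertex outside `S` lies on a cycle in the
subgraph induced by `S ∪ {w}`. -/
def CycleConvex (G : SimpleGraph V) (S : Set V) : Prop :=
  ∀ w : V, w ∉ S →
    ∀ c : (G.induce (insert w S)).Walk ⟨w, Set.mem_insert w S⟩ ⟨w, Set.mem_insert w S⟩,
      ¬ c.IsCycle

/-- The cycle convex hull of `S`: the smallest cycle convex set containing `S`. -/
def cycleHull (G : SimpleGraph V) (S : Set V) : Set V :=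
  ⋂₀ {T : Set V | S ⊆ T ∧ CycleConvex G T}

/-- The cycle hull number: minimum size of a set whose cycle convex hull is everything. -/
noncomputable def cycleHullNumber (G : SimpleGraph V) : ℕ :=
  sInf {n : ℕ | ∃ S : Set V, S.ncard = n ∧ cycleHull G S = Set.univ}

/-- The cycle convexity number: maximum size of a proper cycle convex set. -/
noncomputable def cycleConvexityNumber (G : SimpleGraph V) : ℕ :=
  sSup {n : ℕ | ∃ S : Set V, S.ncard = n ∧ CycleConvex G S ∧ S ≠ Set.univ}

/-- The independence number of a graph. -/
noncomputable def indepNumber (G : SimpleGraph V) : ℕ :=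
  sSup {n : ℕ | ∃ S : Set V, S.ncard = n ∧ S.Pairwise fun a b => ¬ G.Adj a b}

/-- The strong product of two simple graphs. -/
def strongProd (G : SimpleGraph α) (H : SimpleGraph β) : SimpleGraph (α × β) where
  Adj x y := (G.Adj x.1 y.1 ∧ x.2 = y.2) ∨ (x.1 = y.1 ∧ H.Adj x.2 y.2) ∨
    (G.Adj x.1 y.1 ∧ H.Adj x.2 y.2)
  symm.symm x y h := by
    rcases h with ⟨h1, h2⟩ | ⟨h1, h2⟩ | ⟨h1, h2⟩
    · exact Or.inl ⟨h1.symm, h2.symm⟩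
    · exact Or.inr (Or.inl ⟨h1.symm, h2.symm⟩)
    · exact Or.inr (Or.inr ⟨h1.symm, h2.symm⟩)
  loopless.irrefl x h := by
    rcases h with ⟨h1, _⟩ | ⟨_, h2⟩ | ⟨h1, _⟩
    · exact G.loopless.irrefl _ h1
    · exact H.loopless.irrefl _ h2
    · exact G.loopless.irrefl _ h1

/-- The lexicographic product of two simple graphs. -/
def lexProd (G : SimpleGraph α) (H : SimpleGraph β) : SimpleGraph (α × β) where
  Adj x y := G.Adj x.1 y.1 ∨ (x.1 = y.1 ∧ H.Adj x.2 y.2)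
  symm.symm x y h := by
    rcases h with h1 | ⟨h1, h2⟩
    · exact Or.inl h1.symm
    · exact Or.inr ⟨h1.symm, h2.symm⟩
  loopless.irrefl x h := by
    rcases h with h1 | ⟨_, h2⟩
    · exact G.loopless.irrefl _ h1
    · exact H.loopless.irrefl _ h2

section Aux

lemma exists_two_nbrs {V : Type*} {G : SimpleGraph V} {v : V} {c : G.Walk v v}
    (hc : c.IsCycle) : ∃ x y : V, x ≠ y ∧ G.Adj v x ∧ G.Adj v y ∧
      x ∈ c.support ∧ y ∈ c.support := by
  have h3 := hc.three_le_length
  have hnn : ¬ c.Nil := by rw [Walk.not_nil_iff_lt_length]; omega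
  obtain ⟨x, h, p, rfl⟩ := Walk.not_nil_iff.mp hnn
  have hplen : 0 < p.length := by simp [Walk.length_cons] at h3 ⊢; omega
  have hpnn : ¬ p.reverse.Nil := by rw [Walk.not_nil_iff_lt_length]; simpa using hplen
  obtain ⟨y, hy⟩ : ∃ y, y = p.reverse.getVert 1 := ⟨_, rfl⟩
  have hadjy : G.Adj v y := hy ▸ Walk.adj_snd hpnn
  have hyedge : s(v, y) ∈ p.edges := by
    have := Walk.cons_tail_eq p.reverse hpnn
    have hmem : s(v, y) ∈ (Walk.cons (Walk.adj_snd hpnn) p.reverse.tail).edges := by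
      simp [hy]
    rw [this] at hmem
    rwa [Walk.edges_reverse, List.mem_reverse] at hmem
  have hnd : ((Walk.cons h p).edges).Nodup := hc.isTrail.edges_nodup
  rw [Walk.edges_cons, List.nodup_cons] at hnd
  refine ⟨x, y, ?_, h, hadjy, ?_, ?_⟩
  · rintro rfl
    exact hnd.1 hyedge
  · simp
  · have : y ∈ p.reverse.support := by
      have h2 := Walk.cons_support_tail hpnn
      rw [← h2]
      rw [h2, hy]; exact Walk.getVert_mem_support _ _
    rw [Walk.support_reverse, List.mem_reverse] at this
    simp [this]

lemma cycleConvex_of_unique {V : Type*} {G : SimpleGraph V} {T : Set V}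
    (h : ∀ w ∉ T, ∀ x ∈ T, ∀ y ∈ T, G.Adj w x → G.Adj w y → x = y) :
    CycleConvex G T := by
  intro w hw c hcyc
  obtain ⟨x, y, hxy, hax, hay, -, -⟩ := exists_two_nbrs hcyc
  have hx' : G.Adj w x.val := by simpa using hax
  have hy' : G.Adj w y.val := by simpa using hay
  have hxT : x.val ∈ T := by
    rcases x.2 with h1 | h1
    · exact absurd h1 hx'.ne'
    · exact h1
  have hyT : y.val ∈ T := by
    rcases y.2 with h1 | h1
    · exact absurd h1 hy'.ne'
    · exact h1
  exact hxy (Subtype.ext (h w hw _ hxT _ hyT hx' hy'))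

lemma pair_cycleConvex {V : Type*} {G : SimpleGraph V} {a b : V} (hab : ¬ G.Adj a b) :
    CycleConvex G {a, b} := by
  intro w hw c hcyc
  obtain ⟨x, y, hxy, hax, -, hxs, -⟩ := exists_two_nbrs hcyc
  have hx' : G.Adj w x.val := by simpa using hax
  -- rotate the cycle at x
  classical
  have hcyc' := hcyc.rotate hxs
  obtain ⟨u, v', huv, hu, hv, -, -⟩ := exists_two_nbrs hcyc'
  have hu' : G.Adj x.val u.val := by simpa using hu
  have hv' : G.Adj x.val v'.val := by simpa using hv
  have hxval : x.val = a ∨ x.val = b := by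
    rcases x.2 with h1 | h1
    · exact absurd h1 hx'.ne'
    · exact h1
  have key : ∀ z : ↥(insert w ({a, b} : Set V)), G.Adj x.val z.val → z.val ≠ w →
      (x.val = a → z.val = b) ∧ (x.val = b → z.val = a) := by
    intro z hz hzw
    rcases z.2 with h1 | h1 | h1
    · exact absurd h1 hzw
    · constructor
      · intro hxa; rw [hxa, h1] at hz; exact absurd rfl hz.ne
      · intro _; exact h1
    · constructor
      · intro _; exact h1
      · intro hxb; rw [hxb, h1] at hz; exact absurd rfl hz.ne
  -- at most one of u, v' can have value w, so some neighbor of x has value in {a,b}\{x}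
  have : ∃ z : ↥(insert w ({a, b} : Set V)), G.Adj x.val z.val ∧ z.val ≠ w := by
    by_cases huw : u.val = w
    · refine ⟨v', hv', ?_⟩
      intro h1; exact huv (Subtype.ext (huw.trans h1.symm))
    · exact ⟨u, hu', huw⟩
  obtain ⟨z, hz, hzw⟩ := this
  rcases hxval with h1 | h1
  · rw [(key z hz hzw).1 h1, h1] at hz; exact hab hz
  · rw [(key z hz hzw).2 h1, h1] at hz; exact hab hz.symm

lemma triangle_isCycle {V : Type*} {G : SimpleGraph V} {a b c : V} (hab : G.Adj a b)
    (hbc : G.Adj b c) (hca : G.Adj c a) :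
    (Walk.cons hab (Walk.cons hbc (Walk.cons hca Walk.nil))).IsCycle := by
  have h1 := hab.ne
  have h2 := hbc.ne
  have h3 := hca.ne
  simp [Walk.isCycle_def, Walk.isTrail_def, List.nodup_cons, Sym2.eq_iff, h1, h2, h3, Ne.symm h3,
    Ne.symm h1, Ne.symm h2]

lemma square_isCycle {V : Type*} {G : SimpleGraph V} {a b c d : V} (hab : G.Adj a b)
    (hbc : G.Adj b c) (hcd : G.Adj c d) (hda : G.Adj d a) (hac : a ≠ c) (hbd : b ≠ d) :
    (Walk.cons hab (Walk.cons hbc (Walk.cons hcd (Walk.cons hda Walk.nil)))).IsCycle := by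
  have h1 := hab.ne
  have h2 := hbc.ne
  have h3 := hcd.ne
  have h4 := hda.ne
  simp [Walk.isCycle_def, Walk.isTrail_def, List.nodup_cons, Sym2.eq_iff, h1, h2, h3, h4, hac,
    hbd, Ne.symm h1, Ne.symm h2, Ne.symm h3, Ne.symm h4, Ne.symm hac, Ne.symm hbd]

lemma mem_of_triangle {V : Type*} {G : SimpleGraph V} {T : Set V} (hT : CycleConvex G T)
    {a b w : V} (ha : a ∈ T) (hb : b ∈ T) (hwa : G.Adj w a) (hwb : G.Adj w b)
    (hab : G.Adj a b) : w ∈ T := by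
  by_contra hw
  set s : Set V := insert w T with hs
  let W : ↥s := ⟨w, Set.mem_insert w T⟩
  let A : ↥s := ⟨a, Set.mem_insert_of_mem _ ha⟩
  let B : ↥s := ⟨b, Set.mem_insert_of_mem _ hb⟩
  have hWA : (G.induce s).Adj W A := by simpa using hwa
  have hAB : (G.induce s).Adj A B := by simpa using hab
  have hBW : (G.induce s).Adj B W := by simpa using hwb.symm
  exact hT w hw _ (triangle_isCycle hWA hAB hBW)

lemma mem_of_square {V : Type*} {G : SimpleGraph V} {T : Set V} (hT : CycleConvex G T)
    {a b c w : V} (ha : a ∈ T) (hb : b ∈ T) (hc : c ∈ T) (hwa : G.Adj w a) (hab : G.Adj a b)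
    (hbc : G.Adj b c) (hcw : G.Adj c w) (hwb : w ≠ b) (hac : a ≠ c) : w ∈ T := by
  by_contra hw
  set s : Set V := insert w T with hs
  let W : ↥s := ⟨w, Set.mem_insert w T⟩
  let A : ↥s := ⟨a, Set.mem_insert_of_mem _ ha⟩
  let B : ↥s := ⟨b, Set.mem_insert_of_mem _ hb⟩
  let C : ↥s := ⟨c, Set.mem_insert_of_mem _ hc⟩
  have hWA : (G.induce s).Adj W A := by simpa using hwa
  have hAB : (G.induce s).Adj A B := by simpa using hab
  have hBC : (G.induce s).Adj B C := by simpa using hbc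
  have hCW : (G.induce s).Adj C W := by simpa using hcw
  have hWB : W ≠ B := fun h => hwb (congrArg Subtype.val h)
  have hAC : A ≠ C := fun h => hac (congrArg Subtype.val h)
  exact hT w hw _ (square_isCycle hWA hAB hBC hCW hWB hAC)

end Aux

theorem stmt_12 (m n : ℕ) (hm : 2 ≤ m) (hn : 2 ≤ n) :
    cycleHullNumber ((⊤ : SimpleGraph (Fin m)) □ (⊤ : SimpleGraph (Fin n))) = 3 := by
  set G := (⊤ : SimpleGraph (Fin m)) □ (⊤ : SimpleGraph (Fin n)) with hG
  have hadj : ∀ x y : Fin m × Fin n,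
      G.Adj x y ↔ ((x.1 ≠ y.1 ∧ x.2 = y.2) ∨ (x.2 ≠ y.2 ∧ x.1 = y.1)) := by
    intro x y
    constructor
    · rintro (⟨h1, h2⟩ | ⟨h1, h2⟩)
      · exact Or.inl ⟨h1, h2⟩
      · exact Or.inr ⟨h1, h2⟩
    · rintro (⟨h1, h2⟩ | ⟨h1, h2⟩)
      · exact Or.inl ⟨h1, h2⟩
      · exact Or.inr ⟨h1, h2⟩
  set i0 : Fin m := ⟨0, by omega⟩ with hi0
  set i1 : Fin m := ⟨1, by omega⟩ with hi1
  set j0 : Fin n := ⟨0, by omega⟩ with hj0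
  set j1 : Fin n := ⟨1, by omega⟩ with hj1
  have hii : i0 ≠ i1 := by simp [hi0, hi1, Fin.ext_iff]
  have hjj : j0 ≠ j1 := by simp [hj0, hj1, Fin.ext_iff]
  -- lines are cycle convex
  have hline1 : ∀ i : Fin m, CycleConvex G {p : Fin m × Fin n | p.1 = i} := by
    intro i
    apply cycleConvex_of_unique
    intro w hw x hx y hy hwx hwy
    simp only [Set.mem_setOf_eq] at hw hx hy
    have h1 : w.2 = x.2 := by
      rcases (hadj w x).mp hwx with ⟨_, h⟩ | ⟨_, h⟩
      · exact h
      · exact absurd (h.trans hx) hw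
    have h2 : w.2 = y.2 := by
      rcases (hadj w y).mp hwy with ⟨_, h⟩ | ⟨_, h⟩
      · exact h
      · exact absurd (h.trans hy) hw
    exact Prod.ext (hx.trans hy.symm) (h1.symm.trans h2)
  have hline2 : ∀ j : Fin n, CycleConvex G {p : Fin m × Fin n | p.2 = j} := by
    intro j
    apply cycleConvex_of_unique
    intro w hw x hx y hy hwx hwy
    simp only [Set.mem_setOf_eq] at hw hx hy
    have h1 : w.1 = x.1 := by
      rcases (hadj w x).mp hwx with ⟨_, h⟩ | ⟨_, h⟩
      · exact absurd (h.trans hx) hw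
      · exact h
    have h2 : w.1 = y.1 := by
      rcases (hadj w y).mp hwy with ⟨_, h⟩ | ⟨_, h⟩
      · exact absurd (h.trans hy) hw
      · exact h
    exact Prod.ext (h1.symm.trans h2) (hx.trans hy.symm)
  -- the key positive fact
  have hpos : ∀ T : Set (Fin m × Fin n), CycleConvex G T →
      (i0, j0) ∈ T → (i0, j1) ∈ T → (i1, j0) ∈ T → T = Set.univ := by
    intro T hT h00 h01 h10
    have hrow : ∀ j : Fin n, (i0, j) ∈ T := by
      intro j
      by_cases hja : j = j0
      · subst hja; exact h00
      by_cases hjb : j = j1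
      · subst hjb; exact h01
      exact mem_of_triangle hT h00 h01
        ((hadj _ _).mpr (Or.inr ⟨hja, rfl⟩))
        ((hadj _ _).mpr (Or.inr ⟨hjb, rfl⟩))
        ((hadj _ _).mpr (Or.inr ⟨hjj, rfl⟩))
    have hcol : ∀ i : Fin m, (i, j0) ∈ T := by
      intro i
      by_cases hia : i = i0
      · subst hia; exact h00
      by_cases hib : i = i1
      · subst hib; exact h10
      exact mem_of_triangle hT h00 h10
        ((hadj _ _).mpr (Or.inl ⟨hia, rfl⟩))
        ((hadj _ _).mpr (Or.inl ⟨hib, rfl⟩))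
        ((hadj _ _).mpr (Or.inl ⟨hii, rfl⟩))
    apply Set.eq_univ_of_forall
    rintro ⟨i, j⟩
    by_cases hia : i = i0
    · subst hia; exact hrow j
    by_cases hja : j = j0
    · subst hja; exact hcol i
    refine mem_of_square hT (hrow j) h00 (hcol i)
      ((hadj _ _).mpr (Or.inl ⟨hia, rfl⟩))
      ((hadj _ _).mpr (Or.inr ⟨hja, rfl⟩))
      ((hadj _ _).mpr (Or.inl ⟨fun h => hia h.symm, rfl⟩))
      ((hadj _ _).mpr (Or.inr ⟨fun h => hja h.symm, rfl⟩))
      ?_ ?_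
    · intro h
      exact hia (congrArg Prod.fst h)
    · intro h
      exact hia (congrArg Prod.fst h).symm
  -- the witness set of size 3
  set S₀ : Set (Fin m × Fin n) := {(i0, j0), (i0, j1), (i1, j0)} with hS₀
  have hne1 : ((i0, j0) : Fin m × Fin n) ≠ (i0, j1) := fun h => hjj (congrArg Prod.snd h)
  have hne2 : ((i0, j0) : Fin m × Fin n) ≠ (i1, j0) := fun h => hii (congrArg Prod.fst h)
  have hne3 : ((i0, j1) : Fin m × Fin n) ≠ (i1, j0) := fun h => hii (congrArg Prod.fst h)
  have hcard : S₀.ncard = 3 := by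
    rw [hS₀, Set.ncard_insert_of_notMem (by simp [hne1, hne2]) (Set.toFinite _),
      Set.ncard_pair hne3]
  have h3mem : 3 ∈ {k : ℕ | ∃ S : Set (Fin m × Fin n), S.ncard = k ∧ cycleHull G S = Set.univ} := by
    refine ⟨S₀, hcard, ?_⟩
    apply Set.eq_univ_of_forall
    intro x
    rw [cycleHull, Set.mem_sInter]
    rintro T ⟨hsub, hcc⟩
    have := hpos T hcc (hsub (by simp [hS₀])) (hsub (by simp [hS₀])) (hsub (by simp [hS₀]))
    rw [this]
    trivial
  -- lower bound helper: a proper cycle convex superset kills the hull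
  have hkill : ∀ (S T : Set (Fin m × Fin n)), S ⊆ T → CycleConvex G T → T ≠ Set.univ →
      cycleHull G S ≠ Set.univ := by
    intro S T hST hTcc hTne hhull
    apply hTne
    rw [← Set.univ_subset_iff, ← hhull]
    exact Set.sInter_subset_of_mem ⟨hST, hTcc⟩
  -- lines are proper
  have hprop1 : ∀ i : Fin m, {p : Fin m × Fin n | p.1 = i} ≠ Set.univ := by
    intro i h
    have hex : ∃ i' : Fin m, i' ≠ i := by
      rcases eq_or_ne i i0 with rfl | hne
      · exact ⟨i1, fun h => hii h.symm⟩
      · exact ⟨i0, hne.symm⟩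
    obtain ⟨i', hi'⟩ := hex
    have : (i', j0) ∈ {p : Fin m × Fin n | p.1 = i} := h ▸ Set.mem_univ _
    exact hi' this
  have hprop2 : ∀ j : Fin n, {p : Fin m × Fin n | p.2 = j} ≠ Set.univ := by
    intro j h
    have hex : ∃ j' : Fin n, j' ≠ j := by
      rcases eq_or_ne j j0 with rfl | hne
      · exact ⟨j1, fun h => hjj h.symm⟩
      · exact ⟨j0, hne.symm⟩
    obtain ⟨j', hj'⟩ := hex
    have : (i0, j') ∈ {p : Fin m × Fin n | p.2 = j} := h ▸ Set.mem_univ _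
    exact hj' this
  -- main lower bound
  have hlb : ∀ k ∈ {k : ℕ | ∃ S : Set (Fin m × Fin n), S.ncard = k ∧
      cycleHull G S = Set.univ}, 3 ≤ k := by
    rintro k ⟨S, hScard, hShull⟩
    by_contra hk
    push_neg at hk
    have hS2 : S.ncard ≤ 2 := by omega
    by_cases hdiag : ∃ a ∈ S, ∃ b ∈ S, a.1 ≠ b.1 ∧ a.2 ≠ b.2
    · obtain ⟨a, ha, b, hb, h1, h2⟩ := hdiag
      have hne : a ≠ b := fun h => h1 (congrArg Prod.fst h)
      have hSab : S ⊆ {a, b} := by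
        have : ({a, b} : Set (Fin m × Fin n)) = S := by
          apply Set.eq_of_subset_of_ncard_le
          · intro x hx
            rcases hx with rfl | rfl
            · exact ha
            · exact hb
          · rw [Set.ncard_pair hne]; exact hS2
          · exact Set.toFinite S
        rw [← this]
      have hnadj : ¬ G.Adj a b := by
        intro h
        rcases (hadj a b).mp h with ⟨_, h'⟩ | ⟨_, h'⟩
        · exact h2 h'
        · exact h1 h'
      refine hkill S {a, b} hSab (pair_cycleConvex hnadj) ?_ hShull
      intro h
      have : ((a.1, b.2) : Fin m × Fin n) ∈ ({a, b} : Set (Fin m × Fin n)) :=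
        h ▸ Set.mem_univ _
      simp only [Set.mem_insert_iff, Set.mem_singleton_iff] at this
      rcases this with h' | h'
      · have h'' := congrArg Prod.snd h'
        exact h2 h''.symm
      · have h'' := congrArg Prod.fst h'
        exact h1 h''
    · push_neg at hdiag
      rcases Set.eq_empty_or_nonempty S with rfl | ⟨a, ha⟩
      · exact hkill ∅ {p : Fin m × Fin n | p.1 = i0} (Set.empty_subset _) (hline1 i0)
          (hprop1 i0) hShull
      by_cases hrow : ∀ b ∈ S, b.1 = a.1
      · exact hkill S {p : Fin m × Fin n | p.1 = a.1} hrow (hline1 a.1) (hprop1 a.1) hShull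
      · push_neg at hrow
        obtain ⟨b, hb, hba⟩ := hrow
        have hab2 : a.2 = b.2 := hdiag a ha b hb (Ne.symm hba)
        have hne : a ≠ b := fun h => hba (congrArg Prod.fst h).symm
        have hSab : S ⊆ {a, b} := by
          have : ({a, b} : Set (Fin m × Fin n)) = S := by
            apply Set.eq_of_subset_of_ncard_le
            · intro x hx
              rcases hx with rfl | rfl
              · exact ha
              · exact hb
            · rw [Set.ncard_pair hne]; exact hS2
            · exact Set.toFinite S
          rw [← this]
        have hsub : S ⊆ {p : Fin m × Fin n | p.2 = a.2} := by
          intro x hx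
          rcases hSab hx with rfl | rfl
          · rfl
          · exact hab2.symm
        exact hkill S _ hsub (hline2 a.2) (hprop2 a.2) hShull
  exact le_antisymm (Nat.sInf_le h3mem) (le_csInf ⟨3, h3mem⟩ hlb)
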